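/- Let c : ℤ^d → ℤ be a finitary configuration annihilated by the nonzero integer Laurent polynomial f with support S, and let the prime p exceed c_max · Σ_{v∈S} |a_v|, where c_max is the maximum absolute value of c and a_v are the coefficients of f. Then f(X^p) annihilates c. -/

import Mathlib

open Finsupp

section Act

variable {G : Type*} [AddCommMonoid G] {R : Type*} [CommRing R]

/-- Action of a group-algebra element on a configuration. -/
def myAct (g : AddMonoidAlgebra R G) (φ : G → R) (w : G) : R :=
  g.coeff.sum fun v a => a * φ (w + v)

theorem myAct_zero_fn (g : AddMonoidAlgebra R G) (w : G) :
    myAct g (fun _ => (0 : R)) w = 0 := by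
  simp [myAct, Finsupp.sum]

theorem myAct_single (v : G) (a : R) (φ : G → R) (w : G) :
    myAct (AddMonoidAlgebra.single v a) φ w = a * φ (w + v) := by
  simp [myAct, AddMonoidAlgebra.coeff_single, Finsupp.sum_single_index]

theorem myAct_mul (g h : AddMonoidAlgebra R G) (φ : G → R) (w : G) :
    myAct (g * h) φ w = myAct g (myAct h φ) w := by
  rw [AddMonoidAlgebra.mul_def, myAct, AddMonoidAlgebra.coeff_finsuppSum,
    Finsupp.sum_sum_index (fun a => by simp) (fun a b₁ b₂ => by ring)]
  refine Finsupp.sum_congr fun v₁ hv₁ => ?_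
  rw [AddMonoidAlgebra.coeff_finsuppSum,
    Finsupp.sum_sum_index (fun a => by simp) (fun a b₁ b₂ => by ring)]
  show _ = (g.coeff v₁) * myAct h φ (w + v₁)
  rw [myAct, Finsupp.mul_sum]
  refine Finsupp.sum_congr fun v₂ hv₂ => ?_
  rw [AddMonoidAlgebra.coeff_single, Finsupp.sum_single_index (by simp)]
  ring_nf
  rw [add_assoc]

theorem myAct_pow_succ (g : AddMonoidAlgebra R G) (φ : G → R)
    (h0 : ∀ w, myAct g φ w = 0) (n : ℕ) (w : G) :
    myAct (g ^ (n + 1)) φ w = 0 := by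
  induction n generalizing w with
  | zero => simpa using h0 w
  | succ n ih =>
      rw [pow_succ, myAct_mul]
      have : myAct g φ = fun _ => (0 : R) := funext h0
      calc myAct (g ^ (n+1)) (myAct g φ) w
          = myAct (g ^ (n+1)) (fun _ => (0:R)) w := by rw [this]
        _ = 0 := myAct_zero_fn _ _

theorem myAct_finsetSum {ι : Type*} (s : Finset ι) (g : ι → AddMonoidAlgebra R G)
    (φ : G → R) (w : G) :
    myAct (∑ i ∈ s, g i) φ w = ∑ i ∈ s, myAct (g i) φ w := by
  simp only [myAct, AddMonoidAlgebra.coeff_sum]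
  exact (Finsupp.sum_finsetSum_index (fun a => by simp) (fun a b₁ b₂ => by ring)).symm

end Act

/-- If the prime `p` exceeds `c_max · Σ|a_v|` then `f(X^p)` annihilates `c`. -/
theorem stmt_6 (d : ℕ) (c : (Fin d → ℤ) → ℤ) (hc : (Set.range c).Finite)
    (f : (Fin d → ℤ) →₀ ℤ) (hf : f ≠ 0)
    (hann : ∀ w : Fin d → ℤ, ∑ v ∈ f.support, f v * c (w + v) = 0)
    (cmax : ℤ) (hcmax : ∀ u, |c u| ≤ cmax)
    (p : ℕ) (hp : p.Prime)
    (hgt : cmax * ∑ v ∈ f.support, |f v| < (p : ℤ)) :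
    ∀ w : Fin d → ℤ, ∑ v ∈ f.support, f v * c (w + p • v) = 0 := by
  haveI : Fact p.Prime := ⟨hp⟩
  intro w
  haveI : CharP (AddMonoidAlgebra (ZMod p) (Fin d → ℤ)) p :=
    charP_of_injective_algebraMap
      (algebraMap (ZMod p) (AddMonoidAlgebra (ZMod p) (Fin d → ℤ))).injective p
  set cp : (Fin d → ℤ) → ZMod p := fun u => ((c u : ℤ) : ZMod p) with hcp
  -- image of f in ZMod p group algebra
  set F : AddMonoidAlgebra (ZMod p) (Fin d → ℤ) :=
    AddMonoidAlgebra.ofCoeff <| Finsupp.mapRange (Int.cast : ℤ → ZMod p) Int.cast_zero f with hF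
  have hact : ∀ w' : Fin d → ℤ, myAct F cp w' = 0 := by
    intro w'
    have : myAct F cp w' = ((∑ v ∈ f.support, f v * c (w' + v) : ℤ) : ZMod p) := by
      rw [myAct, hF, AddMonoidAlgebra.coeff_ofCoeff, Finsupp.sum_mapRange_index (fun v => by simp)]
      rw [Finsupp.sum]
      push_cast
      rfl

    rw [this, hann w']
    simp
  -- Frobenius : F ^ p = ∑ single (p • v) (f v)
  have hFsum : F = ∑ v ∈ f.support, AddMonoidAlgebra.single v ((f v : ZMod p)) := by
    rw [hF]
    ext u
    rw [AddMonoidAlgebra.coeff_ofCoeff, AddMonoidAlgebra.coeff_sum, Finsupp.mapRange_apply]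
    rw [Finset.sum_apply']
    simp only [AddMonoidAlgebra.coeff_single]
    by_cases hu : u ∈ f.support
    · rw [Finset.sum_eq_single u (fun b _ hb => Finsupp.single_eq_of_ne hb.symm) (fun h => absurd hu h)]
      simp
    · simp only [Finsupp.notMem_support_iff.mp hu, Int.cast_zero]
      refine (Finset.sum_eq_zero fun v hv => ?_).symm
      rw [Finsupp.single_apply, if_neg]
      rintro rfl; exact hu hv
  have hfrob : F ^ p = ∑ v ∈ f.support, AddMonoidAlgebra.single (p • v) ((f v : ZMod p)) := by
    rw [hFsum, sum_pow_char]
    refine Finset.sum_congr rfl fun v hv => ?_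
    rw [AddMonoidAlgebra.single_pow, ZMod.pow_card]
  -- act of F ^ p vanishes
  have hpow : myAct (F ^ p) cp w = 0 := by
    obtain ⟨n, rfl⟩ : ∃ n, p = n + 1 := ⟨p - 1, (Nat.succ_pred_eq_of_pos hp.pos).symm⟩
    exact myAct_pow_succ F cp hact n w
  have hmod : ((∑ v ∈ f.support, f v * c (w + p • v) : ℤ) : ZMod p) = 0 := by
    rw [← hpow, hfrob, myAct_finsetSum]
    push_cast
    refine Finset.sum_congr rfl fun v hv => ?_
    rw [myAct_single]
  have hdvd : (p : ℤ) ∣ ∑ v ∈ f.support, f v * c (w + p • v) := by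
    exact_mod_cast (ZMod.intCast_zmod_eq_zero_iff_dvd _ p).mp hmod
  -- size bound
  have hbound : |∑ v ∈ f.support, f v * c (w + p • v)| ≤ cmax * ∑ v ∈ f.support, |f v| := by
    calc |∑ v ∈ f.support, f v * c (w + p • v)|
        ≤ ∑ v ∈ f.support, |f v * c (w + p • v)| := Finset.abs_sum_le_sum_abs _ _
      _ ≤ ∑ v ∈ f.support, |f v| * cmax := by
          refine Finset.sum_le_sum fun v hv => ?_
          rw [abs_mul]
          exact mul_le_mul_of_nonneg_left (hcmax _) (abs_nonneg _)
      _ = cmax * ∑ v ∈ f.support, |f v| := by rw [← Finset.sum_mul, mul_comm]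
  by_contra hne
  have := Int.le_of_dvd (abs_pos.mpr hne) ((dvd_abs _ _).mpr hdvd)
  omega
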